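/- Let d ≥ 1, let T ≥ 1 be an integer, let G, D > 0, let 𝒟 ⊆ ℝ^d be a convex set of diameter at most D, let f_1,…,f_T : ℝ^d → ℝ be convex differentiable functions whose gradients on 𝒟 are bounded in norm by G, let x_t, x_t^c, x* ∈ 𝒟 for t = 1,…,T, set g_t = ∇f_t(x_t), η^c = 1/(2GD√T), and c_t(x) = −η^c⟨x_t − x, g_t⟩ + (η^c G D)². If Σ_{t=1}^T c_t(x_t^c) ≥ −ln 3 and Σ_{t=1}^T (c_t(x_t^c) − c_t(x*)) ≤ 3/4, then Σ_{t=1}^T f_t(x_t) − Σ_{t=1}^T f_t(x*) ≤ 2(1 + ln 3) G D √T. -/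

import Mathlib

open Set

lemma subgrad_ineq {F : Type*} [NormedAddCommGroup F] [InnerProductSpace ℝ F] [CompleteSpace F]
    {f : F → ℝ} (hf : ConvexOn ℝ Set.univ f) {x : F} (hd : DifferentiableAt ℝ f x) (y : F) :
    f x + (inner ℝ (gradient f x) (y - x) : ℝ) ≤ f y := by
  set v := y - x with hv
  have hder : HasDerivAt (fun s : ℝ => f (x + s • v)) ((fderiv ℝ f x) v) 0 := by
    have hc : HasDerivAt (fun s : ℝ => x + s • v) v 0 := by
      simpa using ((hasDerivAt_id (0:ℝ)).smul_const v).const_add x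
    have h0 : HasFDerivAt f (fderiv ℝ f x) (x + (0:ℝ) • v) := by simpa using hd.hasFDerivAt
    have := h0.comp_hasDerivAt 0 hc
    exact this
  have hgrad : (fderiv ℝ f x) v = (inner ℝ (gradient f x) v : ℝ) := by
    simp [gradient]
  have hslope : Filter.Tendsto (slope (fun s : ℝ => f (x + s • v)) 0) (nhdsWithin 0 (Ioi 0))
      (nhds ((fderiv ℝ f x) v)) := by
    have := hasDerivAt_iff_tendsto_slope.mp hder
    exact this.mono_left (nhdsWithin_mono _ (fun s hs => ne_of_gt hs))
  have hbound : ∀ᶠ s in nhdsWithin (0:ℝ) (Ioi 0),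
      slope (fun s : ℝ => f (x + s • v)) 0 s ≤ f y - f x := by
    filter_upwards [Ioo_mem_nhdsGT_of_mem (by norm_num : (0:ℝ) ∈ Ico (0:ℝ) 1)] with s hs
    obtain ⟨hs0, hs1⟩ := hs
    have hcvx := hf.2 (mem_univ x) (mem_univ y) (by linarith : (0:ℝ) ≤ 1 - s) hs0.le
      (by ring)
    have heq : x + s • v = (1 - s) • x + s • y := by
      rw [hv, smul_sub, sub_smul, one_smul]; abel
    have hle : f (x + s • v) ≤ (1 - s) * f x + s * f y := by rw [heq]; exact hcvx
    simp only [slope_def_field, sub_zero, zero_smul, add_zero]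
    rw [div_le_iff₀ hs0]
    nlinarith
  have := le_of_tendsto hslope hbound
  rw [hgrad] at this
  linarith

theorem maler_sqrtT_regret
    (d T : ℕ) (hd : 1 ≤ d) (hT : 1 ≤ T)
    (G D : ℝ) (hG : 0 < G) (hD : 0 < D)
    (𝒟 : Set (EuclideanSpace ℝ (Fin d))) (hconv : Convex ℝ 𝒟)
    (hdiam : ∀ a ∈ 𝒟, ∀ b ∈ 𝒟, ‖a - b‖ ≤ D)
    (f : ℕ → EuclideanSpace ℝ (Fin d) → ℝ)
    (hfconv : ∀ t ∈ Finset.Icc 1 T, ConvexOn ℝ Set.univ (f t))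
    (hfdiff : ∀ t ∈ Finset.Icc 1 T, ∀ y ∈ 𝒟, DifferentiableAt ℝ (f t) y)
    (hgradbound : ∀ t ∈ Finset.Icc 1 T, ∀ y ∈ 𝒟, ‖gradient (f t) y‖ ≤ G)
    (x xc : ℕ → EuclideanSpace ℝ (Fin d)) (xstar : EuclideanSpace ℝ (Fin d))
    (hx : ∀ t ∈ Finset.Icc 1 T, x t ∈ 𝒟)
    (hxc : ∀ t ∈ Finset.Icc 1 T, xc t ∈ 𝒟)
    (hxstar : xstar ∈ 𝒟)
    (g : ℕ → EuclideanSpace ℝ (Fin d)) (hg : ∀ t, g t = gradient (f t) (x t))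
    (ηc : ℝ) (hηc : ηc = 1 / (2 * G * D * Real.sqrt T))
    (c : ℕ → EuclideanSpace ℝ (Fin d) → ℝ)
    (hc : ∀ t y, c t y = -ηc * (inner ℝ (x t - y) (g t) : ℝ) + (ηc * G * D)^2)
    (hmeta : (∑ t ∈ Finset.Icc 1 T, c t (xc t)) ≥ -Real.log 3)
    (hexpert : (∑ t ∈ Finset.Icc 1 T, (c t (xc t) - c t xstar)) ≤ 3 / 4) :
    (∑ t ∈ Finset.Icc 1 T, f t (x t)) - (∑ t ∈ Finset.Icc 1 T, f t xstar)
      ≤ 2 * (1 + Real.log 3) * G * D * Real.sqrt T := by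
  set S := Real.sqrt T with hSdef
  have hT0 : (0:ℝ) < T := by exact_mod_cast hT
  have hS : 0 < S := Real.sqrt_pos.mpr hT0
  have hS2 : S ^ 2 = T := Real.sq_sqrt hT0.le
  have hηcpos : 0 < ηc := by
    rw [hηc]; positivity
  set A : ℝ := ∑ t ∈ Finset.Icc 1 T, (inner ℝ (x t - xstar) (g t) : ℝ) with hA
  -- step 1: linearization
  have hstep1 : (∑ t ∈ Finset.Icc 1 T, f t (x t)) - (∑ t ∈ Finset.Icc 1 T, f t xstar) ≤ A := by
    rw [← Finset.sum_sub_distrib]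
    apply Finset.sum_le_sum
    intro t ht
    have h1 := subgrad_ineq (hfconv t ht) (hfdiff t ht (x t) (hx t ht)) xstar
    have h2 : (inner ℝ (gradient (f t) (x t)) (xstar - x t) : ℝ)
        = -(inner ℝ (x t - xstar) (g t) : ℝ) := by
      rw [hg, real_inner_comm, ← inner_neg_left]
      congr 1
      abel
    rw [h2] at h1
    linarith
  -- step 2: sum of c at xstar
  have hcsum : (∑ t ∈ Finset.Icc 1 T, c t xstar) = -ηc * A + T * (ηc * G * D)^2 := by
    have : ∀ t ∈ Finset.Icc 1 T, c t xstar
        = -ηc * (inner ℝ (x t - xstar) (g t) : ℝ) + (ηc * G * D)^2 := fun t _ => hc t xstar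
    rw [Finset.sum_congr rfl this, Finset.sum_add_distrib, ← Finset.mul_sum,
      Finset.sum_const, Nat.card_Icc]
    simp [hA]
  have hTK : (T:ℝ) * (ηc * G * D)^2 = 1/4 := by
    have h1 : ηc * G * D = 1/(2*S) := by
      rw [hηc]; field_simp
    rw [h1]
    field_simp
    nlinarith [hS2]
  -- step 3: lower bound on sum c at xstar
  have hlow : (∑ t ∈ Finset.Icc 1 T, c t xstar) ≥ -Real.log 3 - 3/4 := by
    rw [Finset.sum_sub_distrib] at hexpert
    linarith
  have hηcA : ηc * A ≤ 1 + Real.log 3 := by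
    rw [hcsum, hTK] at hlow
    linarith
  have hηcval : ηc * (2 * G * D * S) = 1 := by
    rw [hηc]; field_simp
  have hAbound : A ≤ (1 + Real.log 3) * (2 * G * D * S) := by
    calc A = (ηc * A) * (2 * G * D * S) := by
          rw [mul_comm ηc A, mul_assoc, hηcval, mul_one]
      _ ≤ (1 + Real.log 3) * (2 * G * D * S) :=
          mul_le_mul_of_nonneg_right hηcA (by positivity)
  calc (∑ t ∈ Finset.Icc 1 T, f t (x t)) - (∑ t ∈ Finset.Icc 1 T, f t xstar) ≤ A := hstep1
    _ ≤ (1 + Real.log 3) * (2 * G * D * S) := hAbound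
    _ = 2 * (1 + Real.log 3) * G * D * S := by ring
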